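/- Let G be an r×n matrix over F₂, e ∈ F₂ⁿ, and K ∈ ℝ. Then the partition function admits the high-temperature (MacWilliams-type) expansion Z_e(G;K) = 2^r (cosh K)^n · Σ_{v ∈ F₂ⁿ, G vᵀ = 0} (−1)^{Σ_{b=1}^n lift(e_b)·lift(v_b)} (tanh K)^{|v|}. -/

import Mathlib

open Matrix Filter

/-- Partition function `Z_e(G;K)` of the random-bond Ising model in Wegner's form. -/
noncomputable def Zf {ρ : Type*} [Fintype ρ] [DecidableEq ρ] {n : ℕ}
    (G : Matrix ρ (Fin n) (ZMod 2)) (e : Fin n → ZMod 2) (K : ℝ) : ℝ :=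
  ∑ α : ρ → ZMod 2,
    Real.exp (K * ∑ b : Fin n, (-1 : ℝ) ^ ((e b).val + ((Matrix.vecMul α G) b).val))

/-- `Hs` is an adapted dual of `H`: it stacks `G` on top of `k` extra rows, and its
row space equals `C_H^⊥ = {c | H cᵀ = 0}`. -/
def IsAdaptedDual {rG rH k n : ℕ} (G : Matrix (Fin rG) (Fin n) (ZMod 2))
    (H : Matrix (Fin rH) (Fin n) (ZMod 2))
    (Hs : Matrix (Fin rG ⊕ Fin k) (Fin n) (ZMod 2)) : Prop :=
  (∀ i, Hs (Sum.inl i) = G i) ∧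
  LinearMap.range Hs.vecMulLinear = LinearMap.ker H.mulVecLin

/-- Homological difference `ΔF_e(G,H;K) = ln Z_e(H*;K) − ln Z_e(G;K)`. -/
noncomputable def deltaF {ρ ρ' : Type*} [Fintype ρ] [DecidableEq ρ] [Fintype ρ'] [DecidableEq ρ'] {n : ℕ}
    (G : Matrix ρ (Fin n) (ZMod 2)) (Hs : Matrix ρ' (Fin n) (ZMod 2))
    (e : Fin n → ZMod 2) (K : ℝ) : ℝ :=
  Real.log (Zf Hs e K) - Real.log (Zf G e K)

/-- Disorder average `[X_e]_p = Σ_e p^{|e|}(1−p)^{n−|e|} X_e`. -/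
noncomputable def davg {n : ℕ} (p : ℝ) (X : (Fin n → ZMod 2) → ℝ) : ℝ :=
  ∑ e : Fin n → ZMod 2, p ^ hammingNorm e * (1 - p) ^ (n - hammingNorm e) * X e

/-- Average success probability of maximum-likelihood decoding. -/
noncomputable def Psucc {ρ ρ' : Type*} [Fintype ρ] [DecidableEq ρ] [Fintype ρ'] [DecidableEq ρ'] {n : ℕ}
    (G : Matrix ρ (Fin n) (ZMod 2)) (Hs : Matrix ρ' (Fin n) (ZMod 2))
    (K p : ℝ) : ℝ :=
  davg p (fun e => Zf G e K / Zf Hs e K)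

/-- CSS distance `d_G`: minimum Hamming weight of a vector `c` with `H cᵀ = 0`
that is not in the row space of `G`. -/
noncomputable def dCSS {rG rH n : ℕ} (G : Matrix (Fin rG) (Fin n) (ZMod 2))
    (H : Matrix (Fin rH) (Fin n) (ZMod 2)) : ℕ :=
  sInf {w | ∃ c : Fin n → ZMod 2,
    H.mulVec c = 0 ∧ (¬ ∃ α, Matrix.vecMul α G = c) ∧ hammingNorm c = w}


noncomputable def chi (x : ZMod 2) : ℝ := (-1 : ℝ) ^ x.val

lemma zmod2_cases (x : ZMod 2) : x = 0 ∨ x = 1 := by fin_cases x <;> [exact Or.inl rfl; exact Or.inr rfl]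

lemma chi_zero : chi 0 = 1 := by simp [chi]

lemma val_one' : (1 : ZMod 2).val = 1 := rfl

lemma chi_one : chi 1 = -1 := by simp [chi, val_one']

lemma chi_add (x y : ZMod 2) : chi (x + y) = chi x * chi y := by
  rcases zmod2_cases x with h | h <;> rcases zmod2_cases y with h' | h' <;>
    subst h <;> subst h' <;> simp [chi, val_one'] <;> norm_num [show ((2:ZMod 2)).val = 0 from rfl]

lemma chi_sum {ι : Type*} (s : Finset ι) (f : ι → ZMod 2) :
    chi (∑ i ∈ s, f i) = ∏ i ∈ s, chi (f i) := by
  induction s using Finset.cons_induction with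
  | empty => simp [chi_zero]
  | cons a s ha ih => rw [Finset.sum_cons, Finset.prod_cons, chi_add, ih]

lemma exp_chi (K : ℝ) (x : ZMod 2) :
    Real.exp (K * chi x) = Real.cosh K + chi x * Real.sinh K := by
  rcases zmod2_cases x with h | h <;> subst h <;>
    simp [chi_zero, chi_one, Real.cosh_add_sinh]
  rw [← Real.cosh_sub_sinh]; ring_nf

lemma sum_zmod2 (g : ZMod 2 → ℝ) : ∑ t : ZMod 2, g t = g 0 + g 1 := by
  have h : (Finset.univ : Finset (ZMod 2)) = {0, 1} := by decide
  rw [h, Finset.sum_insert (by decide), Finset.sum_singleton]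

lemma sum_chi_dot {r : ℕ} (u : Fin r → ZMod 2) :
    ∑ α : Fin r → ZMod 2, chi (α ⬝ᵥ u) = if u = 0 then (2 : ℝ) ^ r else 0 := by
  have key : ∑ α : Fin r → ZMod 2, chi (α ⬝ᵥ u)
      = ∏ i : Fin r, (1 + chi (u i)) := by
    have h1 : ∀ α : Fin r → ZMod 2, chi (α ⬝ᵥ u) = ∏ i, chi (α i * u i) := by
      intro α; rw [dotProduct, chi_sum]
    simp only [h1]
    rw [← Fintype.prod_sum (fun i (t : ZMod 2) => chi (t * u i))]
    congr 1; funext i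
    rw [sum_zmod2]; simp [chi_zero]
  rw [key]
  by_cases hu : u = 0
  · subst hu; simp [chi_zero]; norm_num
  · simp only [hu, if_false]
    obtain ⟨i, hi⟩ := Function.ne_iff.mp hu
    refine Finset.prod_eq_zero (Finset.mem_univ i) ?_
    rcases zmod2_cases (u i) with h | h
    · exact absurd h hi
    · rw [h, chi_one]; ring

lemma val_mul' (x y : ZMod 2) : (x * y).val = x.val * y.val := by
  fin_cases x <;> fin_cases y <;> rfl

/-- MacWilliams-type high-temperature expansion of the partition function. -/
theorem stmt0 {r n : ℕ} (G : Matrix (Fin r) (Fin n) (ZMod 2))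
    (e : Fin n → ZMod 2) (K : ℝ) :
    Zf G e K = 2 ^ r * Real.cosh K ^ n *
      ∑ v : Fin n → ZMod 2,
        if G.mulVec v = 0 then
          (-1 : ℝ) ^ (∑ b : Fin n, (e b).val * (v b).val) * Real.tanh K ^ hammingNorm v
        else 0 := by
  classical
  have hcosh : (0:ℝ) < Real.cosh K := Real.cosh_pos K
  have step1 : Zf G e K = ∑ α : Fin r → ZMod 2, ∏ b : Fin n,
      ∑ t : ZMod 2, chi (e b * t) * chi ((Matrix.vecMul α G) b * t) *
        (if t = 0 then Real.cosh K else Real.sinh K) := by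
    unfold Zf
    refine Finset.sum_congr rfl fun α _ => ?_
    rw [Finset.mul_sum, Real.exp_sum]
    refine Finset.prod_congr rfl fun b _ => ?_
    have h1 : (-1:ℝ) ^ ((e b).val + ((Matrix.vecMul α G) b).val)
        = chi (e b + (Matrix.vecMul α G) b) := by
      rw [chi_add, chi, chi, pow_add]
    rw [h1, exp_chi, sum_zmod2]
    simp only [mul_zero, mul_one, chi_zero, if_true, if_neg one_ne_zero, chi_add]
    ring
  have step2 : ∀ α : Fin r → ZMod 2,
      (∏ b : Fin n, ∑ t : ZMod 2, chi (e b * t) * chi ((Matrix.vecMul α G) b * t) *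
        (if t = 0 then Real.cosh K else Real.sinh K))
      = ∑ v : Fin n → ZMod 2,
          (∏ b, chi (e b * v b)) * chi (α ⬝ᵥ G.mulVec v) *
            ∏ b, (if v b = 0 then Real.cosh K else Real.sinh K) := by
    intro α
    rw [Fintype.prod_sum]
    refine Finset.sum_congr rfl fun v _ => ?_
    rw [Finset.prod_mul_distrib, Finset.prod_mul_distrib]
    congr 2
    have hd : α ⬝ᵥ G.mulVec v = ∑ b, (Matrix.vecMul α G) b * v b := by
      rw [Matrix.dotProduct_mulVec]; rfl
    rw [hd, chi_sum]
  rw [step1]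
  simp only [step2]
  rw [Finset.sum_comm]
  have step3 : ∀ v : Fin n → ZMod 2,
      (∑ α : Fin r → ZMod 2,
        (∏ b, chi (e b * v b)) * chi (α ⬝ᵥ G.mulVec v) *
          ∏ b, (if v b = 0 then Real.cosh K else Real.sinh K))
      = ((∏ b, chi (e b * v b)) * ∏ b, (if v b = 0 then Real.cosh K else Real.sinh K)) *
          (if G.mulVec v = 0 then (2:ℝ) ^ r else 0) := by
    intro v
    rw [← sum_chi_dot (G.mulVec v), Finset.mul_sum]
    exact Finset.sum_congr rfl fun α _ => by ring
  simp only [step3]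
  rw [Finset.mul_sum]
  refine Finset.sum_congr rfl fun v _ => ?_
  by_cases hv : G.mulVec v = 0
  · simp only [hv, if_pos rfl, if_true]
    have hA : (∏ b, chi (e b * v b)) = (-1:ℝ) ^ (∑ b : Fin n, (e b).val * (v b).val) := by
      rw [← Finset.prod_pow_eq_pow_sum]
      exact Finset.prod_congr rfl fun b _ => by rw [chi, val_mul']
    have hk : hammingNorm v ≤ n := by
      have := Finset.card_filter_le (Finset.univ : Finset (Fin n)) (fun b => v b ≠ 0)
      simpa [hammingNorm] using this
    have hB : (∏ b, (if v b = 0 then Real.cosh K else Real.sinh K))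
        = Real.cosh K ^ (n - hammingNorm v) * Real.sinh K ^ hammingNorm v := by
      rw [Finset.prod_ite _ _]
      rw [Finset.prod_const, Finset.prod_const]
      congr 2
      · have hfc : Finset.filter (fun b => v b = 0) Finset.univ
            = Finset.filter (fun b => ¬ v b ≠ 0) Finset.univ := by
          refine Finset.filter_congr fun b _ => by simp
        rw [hfc]
        have := Finset.card_filter_add_card_filter_not
          (s := (Finset.univ : Finset (Fin n))) (p := fun b => v b ≠ 0)
        have hcard : (Finset.univ : Finset (Fin n)).card = n := by simp
        unfold hammingNorm
        omega
    rw [hA, hB, Real.tanh_eq_sinh_div_cosh, div_pow]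
    have hpow : Real.cosh K ^ (n - hammingNorm v) * Real.cosh K ^ hammingNorm v
        = Real.cosh K ^ n := pow_sub_mul_pow _ hk
    rw [← hpow]
    field_simp
  · simp [hv]
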